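/- arXiv:0812.2968 — 2 statements merged into one kernel-verified Lean document; each statement's English description precedes it below -/
import Mathlib

section
/- Let r, n be positive integers and let S_k be the simple symmetric random walk on ℤ started at 0 (steps ±1 with probability 1/2). Then P{|S_k| ≤ r for all k = 1, …, 2n, and S_{2n} = 0} ≤ (cos(π/(2(r+1))))^{2n}. -/
open scoped Classical

noncomputable section ConfinedWalkAux

namespace ConfinedWalkAux

def step : Bool → ℤ
  | true => 1
  | false => -1

def psum {N : ℕ} (ε : Fin N → Bool) (k : ℕ) : ℤ :=
  ∑ i ∈ Finset.univ.filter (fun i : Fin N => (i : ℕ) < k), step (ε i)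

lemma psum_zero {N : ℕ} (ε : Fin N → Bool) : psum ε 0 = 0 := by
  simp [psum]

lemma psum_congr {N : ℕ} {ε ε' : Fin N → Bool} {k : ℕ}
    (h : ∀ i : Fin N, (i : ℕ) < k → ε i = ε' i) : psum ε k = psum ε' k :=
  Finset.sum_congr rfl (fun i hi => by rw [h i (Finset.mem_filter.mp hi).2])

lemma psum_succ {N : ℕ} (ε : Fin N → Bool) (k : ℕ) (hk : k < N) :
    psum ε (k + 1) = psum ε k + step (ε ⟨k, hk⟩) := by
  unfold psum
  rw [show (Finset.univ.filter (fun i : Fin N => (i : ℕ) < k + 1)) =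
      insert (⟨k, hk⟩ : Fin N) (Finset.univ.filter (fun i : Fin N => (i : ℕ) < k)) by
    ext i
    simp only [Finset.mem_filter, Finset.mem_univ, true_and, Finset.mem_insert, Fin.ext_iff]
    omega]
  rw [Finset.sum_insert (by simp)]
  ring

def walkOK (r : ℕ) {N : ℕ} (ε : Fin N → Bool) (k : ℕ) : Prop :=
  ∀ j : ℕ, 1 ≤ j → j ≤ k → |psum ε j| ≤ (r : ℤ)

lemma abs_psum_le {r N : ℕ} {ε : Fin N → Bool} {k : ℕ} (h : walkOK r ε k) :
    |psum ε k| ≤ (r : ℤ) := by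
  cases k with
  | zero => simp [psum_zero]
  | succ m => exact h (m + 1) (Nat.succ_le_succ (Nat.zero_le m)) le_rfl

lemma abs_step (b : Bool) : |step b| = 1 := by cases b <;> simp [step]

def phi (r : ℕ) (x : ℤ) : ℝ := Real.cos (Real.pi / (2 * ((r : ℝ) + 1)) * x)

lemma phi_zero (r : ℕ) : phi r 0 = 1 := by simp [phi]

lemma a_pos (r : ℕ) : 0 < Real.pi / (2 * ((r : ℝ) + 1)) := by
  apply div_pos Real.pi_pos
  positivity

lemma phi_nonneg (r : ℕ) (x : ℤ) (hx : |x| ≤ (r : ℤ) + 1) : 0 ≤ phi r x := by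
  set a := Real.pi / (2 * ((r : ℝ) + 1)) with ha
  have hap : 0 < a := a_pos r
  have hxr : |(x : ℝ)| ≤ (r : ℝ) + 1 := by
    rw [show ((r : ℝ) + 1) = (((r : ℤ) + 1 : ℤ) : ℝ) by push_cast; ring, ← Int.cast_abs]
    exact_mod_cast hx
  have habs : |a * (x : ℝ)| ≤ Real.pi / 2 := by
    rw [abs_mul, abs_of_pos hap]
    calc a * |(x : ℝ)| ≤ a * ((r : ℝ) + 1) := by
          exact mul_le_mul_of_nonneg_left hxr hap.le
      _ = Real.pi / 2 := by
          rw [ha]; field_simp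
  obtain ⟨h1, h2⟩ := abs_le.mp habs
  exact Real.cos_nonneg_of_mem_Icc ⟨by linarith, h2⟩

lemma phi_step (r : ℕ) (x : ℤ) :
    phi r (x + 1) + phi r (x - 1)
      = 2 * Real.cos (Real.pi / (2 * ((r : ℝ) + 1))) * phi r x := by
  unfold phi
  set a := Real.pi / (2 * ((r : ℝ) + 1)) with ha
  push_cast
  rw [show a * ((x : ℝ) + 1) = a * x + a from by ring,
      show a * ((x : ℝ) - 1) = a * x - a from by ring,
      Real.cos_add, Real.cos_sub]
  ring

lemma cos_a_nonneg (r : ℕ) : 0 ≤ Real.cos (Real.pi / (2 * ((r : ℝ) + 1))) := by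
  apply Real.cos_nonneg_of_mem_Icc
  have hap := a_pos r
  constructor
  · linarith [Real.pi_pos]
  · rw [div_le_div_iff₀ (by positivity) (by norm_num)]
    nlinarith [Real.pi_pos, Nat.cast_nonneg (α := ℝ) r]

/-- The transfer-operator weighted sum. -/
def A (r N k : ℕ) : ℝ :=
  ∑ ε : Fin N → Bool, if walkOK r ε k then phi r (psum ε k) else 0

lemma A_zero (r N : ℕ) : A r N 0 = 2 ^ N := by
  have : ∀ ε : Fin N → Bool,
      (if walkOK r ε 0 then phi r (psum ε 0) else 0) = 1 := by
    intro ε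
    have hw : walkOK r ε 0 := fun j hj hj' => absurd (hj.trans hj') (by omega)
    rw [if_pos hw]
    simp [psum_zero, phi_zero]
  rw [A, Finset.sum_congr rfl (fun ε _ => this ε)]
  simp [Finset.card_univ]

def flipAt {N : ℕ} (i : Fin N) (ε : Fin N → Bool) : Fin N → Bool :=
  Function.update ε i (!ε i)

lemma flipAt_involutive {N : ℕ} (i : Fin N) : Function.Involutive (flipAt i) := by
  intro ε
  unfold flipAt
  simp [Function.update_idem]

lemma psum_flipAt {N : ℕ} (i : Fin N) (ε : Fin N → Bool) {k : ℕ} (hk : k ≤ (i : ℕ)) :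
    psum (flipAt i ε) k = psum ε k := by
  apply psum_congr
  intro j hj
  unfold flipAt
  rw [Function.update_of_ne]
  intro h
  rw [h] at hj
  omega

lemma walkOK_flipAt {N : ℕ} {r : ℕ} (i : Fin N) (ε : Fin N → Bool) {k : ℕ}
    (hk : k ≤ (i : ℕ)) : walkOK r (flipAt i ε) k ↔ walkOK r ε k := by
  unfold walkOK
  constructor <;> intro h j hj hj' <;>
    have := h j hj hj' <;>
    rwa [psum_flipAt i ε (hj'.trans hk)] at * <;> assumption

lemma A_succ_le (r N k : ℕ) (hk : k < N) :
    A r N (k + 1) ≤ Real.cos (Real.pi / (2 * ((r : ℝ) + 1))) * A r N k := by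
  set lam := Real.cos (Real.pi / (2 * ((r : ℝ) + 1))) with hlam
  set i : Fin N := ⟨k, hk⟩ with hi
  -- the intermediate sum
  set h : (Fin N → Bool) → ℝ :=
    fun ε => if walkOK r ε k then phi r (psum ε (k + 1)) else 0 with hh
  have step1 : A r N (k + 1) ≤ ∑ ε : Fin N → Bool, h ε := by
    apply Finset.sum_le_sum
    intro ε _
    by_cases hw : walkOK r ε (k + 1)
    · have hwk : walkOK r ε k := fun j hj hj' => hw j hj (hj'.trans (Nat.le_succ k))
      rw [if_pos hw, hh]
      simp only [if_pos hwk]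
      exact le_rfl
    · rw [if_neg hw, hh]
      by_cases hwk : walkOK r ε k
      · simp only [if_pos hwk]
        apply phi_nonneg
        rw [psum_succ ε k hk]
        calc |psum ε k + step (ε ⟨k, hk⟩)| ≤ |psum ε k| + |step (ε ⟨k, hk⟩)| := abs_add_le _ _
          _ ≤ (r : ℤ) + 1 := by
              rw [abs_step]
              exact add_le_add_left (abs_psum_le hwk) 1
      · simp only [if_neg hwk]; exact le_rfl
  have step2 : ∑ ε : Fin N → Bool, h ε = lam * A r N k := by
    have hflip : ∑ ε : Fin N → Bool, h (flipAt i ε) = ∑ ε : Fin N → Bool, h ε :=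
      Function.Bijective.sum_comp (flipAt_involutive i).bijective h
    have key : ∀ ε : Fin N → Bool,
        h ε + h (flipAt i ε)
          = (if walkOK r ε k then 2 * lam * phi r (psum ε k) else 0) := by
      intro ε
      rw [hh]
      simp only
      rw [psum_succ ε k hk, psum_succ (flipAt i ε) k hk,
          psum_flipAt i ε (le_refl k)]
      rw [if_congr (walkOK_flipAt i ε (le_refl k)) rfl rfl]
      by_cases hwk : walkOK r ε k
      · simp only [if_pos hwk]
        have hflipval : flipAt i ε ⟨k, hk⟩ = !ε ⟨k, hk⟩ := by
          unfold flipAt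
          rw [hi, Function.update_self]
        rw [hflipval]
        have hps := phi_step r (psum ε k)
        have hx1 : psum ε k + (-1 : ℤ) = psum ε k - 1 := by ring
        cases hb : ε ⟨k, hk⟩ <;>
          simp only [step, Bool.not_false, Bool.not_true] <;>
          rw [hx1, hlam] <;> linarith
      · simp [hwk]
    have : 2 * ∑ ε : Fin N → Bool, h ε
        = ∑ ε : Fin N → Bool, (h ε + h (flipAt i ε)) := by
      rw [Finset.sum_add_distrib, hflip]; ring
    rw [Finset.sum_congr rfl (fun ε _ => key ε)] at this
    have h2 : ∑ ε : Fin N → Bool,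
        (if walkOK r ε k then 2 * lam * phi r (psum ε k) else 0)
        = 2 * lam * A r N k := by
      rw [A, Finset.mul_sum]
      apply Finset.sum_congr rfl
      intro ε _
      by_cases hwk : walkOK r ε k <;> simp [hwk]
    rw [h2] at this
    linarith
  calc A r N (k + 1) ≤ ∑ ε : Fin N → Bool, h ε := step1
    _ = lam * A r N k := step2

lemma A_le (r N : ℕ) : ∀ k : ℕ, k ≤ N →
    A r N k ≤ Real.cos (Real.pi / (2 * ((r : ℝ) + 1))) ^ k * 2 ^ N := by
  intro k
  induction k with
  | zero => intro _; rw [A_zero]; simp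
  | succ m ih =>
      intro hm
      have hmN : m < N := hm
      calc A r N (m + 1)
          ≤ Real.cos (Real.pi / (2 * ((r : ℝ) + 1))) * A r N m :=
            A_succ_le r N m hmN
        _ ≤ Real.cos (Real.pi / (2 * ((r : ℝ) + 1))) *
              (Real.cos (Real.pi / (2 * ((r : ℝ) + 1))) ^ m * 2 ^ N) := by
            apply mul_le_mul_of_nonneg_left (ih (le_of_lt hmN)) (cos_a_nonneg r)
        _ = Real.cos (Real.pi / (2 * ((r : ℝ) + 1))) ^ (m + 1) * 2 ^ N := by ring

end ConfinedWalkAux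

end ConfinedWalkAux

open ConfinedWalkAux in
/-- The probability that a simple symmetric random walk stays in `[-r, r]` for
`2n` steps and returns to `0` is at most `cos(π/(2(r+1)))^{2n}`. -/
theorem confined_walk_return_bound (r n : ℕ) (hr : 1 ≤ r) (hn : 1 ≤ n) :
    ((Finset.univ.filter (fun ε : Fin (2 * n) → Bool =>
        (∀ k : ℕ, 1 ≤ k → k ≤ 2 * n →
          |∑ i ∈ Finset.univ.filter (fun i : Fin (2 * n) => (i : ℕ) < k),
              (if ε i then (1:ℤ) else -1)| ≤ r) ∧
        (∑ i : Fin (2 * n), (if ε i then (1:ℤ) else -1)) = 0)).card : ℝ)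
        / 2 ^ (2 * n)
      ≤ Real.cos (Real.pi / (2 * (r + 1))) ^ (2 * n) := by
  set N := 2 * n with hN
  -- translate the statement's sums into `psum`
  have hpsum : ∀ (ε : Fin N → Bool) (k : ℕ),
      (∑ i ∈ Finset.univ.filter (fun i : Fin N => (i : ℕ) < k),
        (if ε i then (1:ℤ) else -1)) = psum ε k := by
    intro ε k
    apply Finset.sum_congr rfl
    intro i _
    cases ε i <;> rfl
  have hfull : ∀ ε : Fin N → Bool,
      (∑ i : Fin N, (if ε i then (1:ℤ) else -1)) = psum ε N := by
    intro ε
    rw [← hpsum ε N]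
    apply Finset.sum_congr
    · ext i
      simp [i.isLt]
    · intro i _; cases ε i <;> rfl
  -- bound the cardinality by the weighted sum A
  have hcard : ((Finset.univ.filter (fun ε : Fin N → Bool =>
      (∀ k : ℕ, 1 ≤ k → k ≤ N →
        |∑ i ∈ Finset.univ.filter (fun i : Fin N => (i : ℕ) < k),
            (if ε i then (1:ℤ) else -1)| ≤ r) ∧
      (∑ i : Fin N, (if ε i then (1:ℤ) else -1)) = 0)).card : ℝ)
      ≤ A r N N := by
    rw [A]
    rw [Finset.card_filter]
    push_cast
    apply Finset.sum_le_sum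
    intro ε _
    by_cases hP : (∀ k : ℕ, 1 ≤ k → k ≤ N →
        |∑ i ∈ Finset.univ.filter (fun i : Fin N => (i : ℕ) < k),
            (if ε i then (1:ℤ) else -1)| ≤ r) ∧
        (∑ i : Fin N, (if ε i then (1:ℤ) else -1)) = 0
    · rw [if_pos hP]
      have hw : walkOK r ε N := by
        intro j hj hj'
        have := hP.1 j hj hj'
        rwa [hpsum] at this
      rw [if_pos hw]
      have : psum ε N = 0 := by rw [← hfull]; exact hP.2
      rw [this, phi_zero]
    · rw [if_neg hP]
      by_cases hw : walkOK r ε N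
      · rw [if_pos hw]
        apply phi_nonneg
        exact (abs_psum_le hw).trans (by omega)
      · rw [if_neg hw]
  have hA := A_le r N N le_rfl
  have h2 : (0:ℝ) < 2 ^ N := by positivity
  rw [div_le_iff₀ h2]
  calc ((Finset.univ.filter _).card : ℝ) ≤ A r N N := hcard
    _ ≤ Real.cos (Real.pi / (2 * ((r : ℝ) + 1))) ^ N * 2 ^ N := hA
end

section
/- Let σ > 1, c > 0 and d ≥ 1. Then there exist constants C, c₁ > 0 such that for all sufficiently large t, ∫_{log 2}^∞ z^{d−1} e^{−z − c t z^{1−σ}} dz ≤ C t^{(2d−1)/(2σ)} e^{−c₁ t^{1/σ}}. -/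
open MeasureTheory

/-- Laplace-method upper bound: for `σ > 1`, `c > 0`, `d ≥ 1`,
`∫_{log 2}^∞ z^{d-1} e^{-z - c t z^{1-σ}} dz ≤ C t^{(2d-1)/(2σ)} e^{-c₁ t^{1/σ}}`
for large `t`. -/
theorem laplace_method_bound (σ c : ℝ) (d : ℕ) (hσ : 1 < σ) (hc : 0 < c) (hd : 1 ≤ d) :
    ∃ C > (0:ℝ), ∃ c₁ > (0:ℝ), ∃ t₀ > (0:ℝ), ∀ t : ℝ, t₀ ≤ t →
      ∫ z in Set.Ioi (Real.log 2),
          z ^ ((d:ℝ) - 1) * Real.exp (-z - c * t * z ^ (1 - σ))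
        ≤ C * t ^ ((2 * (d:ℝ) - 1) / (2 * σ)) * Real.exp (-c₁ * t ^ (1 / σ)) := by
  have hl : (0:ℝ) < Real.log 2 := Real.log_pos one_lt_two
  have hd1 : (1:ℝ) ≤ (d:ℝ) := by exact_mod_cast hd
  set g : ℝ → ℝ := fun z => z ^ ((d:ℝ) - 1) * Real.exp (-(1/2) * z) with hg_def
  have hg : IntegrableOn g (Set.Ioi (Real.log 2)) := by
    have := integrableOn_rpow_mul_exp_neg_mul_rpow (s := (d:ℝ) - 1) (p := 1) (b := 1/2)
      (by linarith) one_pos (by norm_num)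
    simp only [Real.rpow_one] at this
    exact this.mono_set (Set.Ioi_subset_Ioi hl.le)
  set C : ℝ := (∫ z in Set.Ioi (Real.log 2), g z) + 1 with hC_def
  have hInt_nonneg : 0 ≤ ∫ z in Set.Ioi (Real.log 2), g z := by
    apply setIntegral_nonneg measurableSet_Ioi
    intro z hz
    exact mul_nonneg (Real.rpow_nonneg (le_trans hl.le (le_of_lt hz)) _) (Real.exp_pos _).le
  refine ⟨C, by positivity, min 1 c / 2, div_pos (lt_min one_pos hc) two_pos, 1, one_pos,
    fun t ht => ?_⟩
  have ht0 : (0:ℝ) < t := lt_of_lt_of_le one_pos ht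
  set K : ℝ := Real.exp (-(min 1 c / 2) * t ^ (1/σ)) with hK_def
  have hK0 : 0 < K := Real.exp_pos _
  -- pointwise bound
  have hpt : ∀ z ∈ Set.Ioi (Real.log 2),
      z ^ ((d:ℝ) - 1) * Real.exp (-z - c * t * z ^ (1 - σ)) ≤ g z * K := by
    intro z hz
    have hz0 : 0 < z := lt_trans hl hz
    have hkey : min 1 c / 2 * t ^ (1/σ) + (1/2) * z ≤ z + c * t * z ^ (1 - σ) := by
      rcases le_or_gt (t ^ (1/σ)) z with h | h
      · have h1 : min 1 c / 2 * t ^ (1/σ) ≤ (1/2) * z := by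
          have hm : min 1 c / 2 ≤ 1/2 := by
            have := min_le_left 1 c; linarith
          nlinarith [Real.rpow_nonneg ht0.le (1/σ)]
        have h2 : 0 ≤ c * t * z ^ (1 - σ) :=
          mul_nonneg (mul_nonneg hc.le ht0.le) (Real.rpow_nonneg hz0.le _)
        linarith
      · have hzp : (t ^ (1/σ)) ^ (1 - σ) ≤ z ^ (1 - σ) :=
          Real.rpow_le_rpow_of_nonpos hz0 h.le (by linarith)
        have heq : (t ^ (1/σ)) ^ (1 - σ) = t ^ ((1-σ)/σ) := by
          rw [← Real.rpow_mul ht0.le]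
          congr 1
          field_simp
        have hσ0 : σ ≠ 0 := by linarith
        have hsum : (1:ℝ) + (1-σ)/σ = 1/σ := by field_simp; ring
        have hmul : t * t ^ ((1-σ)/σ) = t ^ (1/σ) := by
          calc t * t ^ ((1-σ)/σ) = t ^ (1:ℝ) * t ^ ((1-σ)/σ) := by rw [Real.rpow_one]
            _ = t ^ ((1:ℝ) + (1-σ)/σ) := (Real.rpow_add ht0 _ _).symm
            _ = t ^ (1/σ) := by rw [hsum]
        have hzp' : t ^ ((1-σ)/σ) ≤ z ^ (1 - σ) := heq ▸ hzp
        have h3 : c * t ^ (1/σ) ≤ c * t * z ^ (1 - σ) := by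
          have := mul_le_mul_of_nonneg_left hzp' (mul_nonneg hc.le ht0.le)
          calc c * t ^ (1/σ) = c * t * t ^ ((1-σ)/σ) := by rw [← hmul]; ring
            _ ≤ c * t * z ^ (1 - σ) := this
        have h4 : min 1 c / 2 * t ^ (1/σ) ≤ c * t ^ (1/σ) := by
          have h5 : min 1 c / 2 ≤ c := by
            have := min_le_right 1 c; linarith
          nlinarith [Real.rpow_nonneg ht0.le (1/σ)]
        linarith
    have hexp : Real.exp (-z - c * t * z ^ (1 - σ)) ≤ Real.exp (-(1/2) * z) * K := by
      rw [hK_def, ← Real.exp_add]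
      apply Real.exp_le_exp.2
      linarith
    calc z ^ ((d:ℝ) - 1) * Real.exp (-z - c * t * z ^ (1 - σ))
        ≤ z ^ ((d:ℝ) - 1) * (Real.exp (-(1/2) * z) * K) := by
          apply mul_le_mul_of_nonneg_left hexp (Real.rpow_nonneg hz0.le _)
      _ = g z * K := by rw [hg_def]; ring
  have hgK : IntegrableOn (fun z => g z * K) (Set.Ioi (Real.log 2)) := hg.mul_const K
  have hcont : ContinuousOn
      (fun z => z ^ ((d:ℝ) - 1) * Real.exp (-z - c * t * z ^ (1 - σ)))
      (Set.Ioi (Real.log 2)) := by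
    intro z hz
    have hz0 : z ≠ 0 := ne_of_gt (lt_trans hl hz)
    apply ContinuousAt.continuousWithinAt
    have h1 := Real.continuousAt_rpow_const z ((d:ℝ) - 1) (Or.inl hz0)
    have h2 := Real.continuousAt_rpow_const z (1 - σ) (Or.inl hz0)
    exact h1.mul (Real.continuous_exp.continuousAt.comp
      ((continuousAt_id.neg).sub (continuousAt_const.mul h2)))
  have hf : IntegrableOn (fun z => z ^ ((d:ℝ) - 1) * Real.exp (-z - c * t * z ^ (1 - σ)))
      (Set.Ioi (Real.log 2)) := by
    apply Integrable.mono' hgK (hcont.aestronglyMeasurable measurableSet_Ioi)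
    filter_upwards [self_mem_ae_restrict measurableSet_Ioi] with z hz
    rw [Real.norm_eq_abs, abs_of_nonneg
      (mul_nonneg (Real.rpow_nonneg (lt_trans hl hz).le _) (Real.exp_pos _).le)]
    exact hpt z hz
  calc ∫ z in Set.Ioi (Real.log 2), z ^ ((d:ℝ) - 1) * Real.exp (-z - c * t * z ^ (1 - σ))
      ≤ ∫ z in Set.Ioi (Real.log 2), g z * K :=
        setIntegral_mono_on hf hgK measurableSet_Ioi hpt
    _ = (∫ z in Set.Ioi (Real.log 2), g z) * K := integral_mul_const _ _
    _ ≤ C * t ^ ((2 * (d:ℝ) - 1) / (2 * σ)) * K := by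
        have hpow : (1:ℝ) ≤ t ^ ((2 * (d:ℝ) - 1) / (2 * σ)) := by
          apply Real.one_le_rpow ht
          apply div_nonneg <;> linarith
        have hCI : (∫ z in Set.Ioi (Real.log 2), g z) ≤ C := by rw [hC_def]; linarith
        have hC0 : (0:ℝ) < C := by rw [hC_def]; linarith
        have h6 : (∫ z in Set.Ioi (Real.log 2), g z) ≤ C * t ^ ((2 * (d:ℝ) - 1) / (2 * σ)) := by
          nlinarith
        nlinarith
    _ = C * t ^ ((2 * (d:ℝ) - 1) / (2 * σ)) * Real.exp (-(min 1 c / 2) * t ^ (1/σ)) := rfl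
end
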